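/- Let a > 0. Define m₁ = e^{a}/(1+e^{a})² and m₀ = a·e^{a}/(1+e^{a})² + 1/(1+e^{a}). Then for every z ∈ [−a, a]: m₁ z + m₀ ≤ 1/(1+e^{−z}). That is, the line through the point (−a, σ(−a)) with slope σ'(−a), where σ(z) = 1/(1+e^{−z}), lower-bounds the sigmoid function on the interval [−a, a]. -/

import Mathlib

/-- The tangent line of the logistic sigmoid `σ(z) = 1/(1+e^{-z})` at the left endpoint
`z = -a` lower-bounds the sigmoid on `[-a, a]`:
`m₁ z + m₀ ≤ 1/(1+e^{-z})` with `m₁ = e^a/(1+e^a)²` and `m₀ = a e^a/(1+e^a)² + 1/(1+e^a)`. -/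
theorem stmt_5 (a : ℝ) (ha : 0 < a) :
    ∀ z ∈ Set.Icc (-a) a,
      (Real.exp a / (1 + Real.exp a) ^ 2) * z
          + (a * Real.exp a / (1 + Real.exp a) ^ 2 + 1 / (1 + Real.exp a))
        ≤ 1 / (1 + Real.exp (-z)) := by
  intro z hz
  set m : ℝ := Real.exp a / (1 + Real.exp a) ^ 2 with hm
  set g : ℝ → ℝ :=
    fun t => 1 / (1 + Real.exp (-t)) - (m * t + (a * m + 1 / (1 + Real.exp a))) with hg
  have hpos : ∀ t : ℝ, 0 < 1 + Real.exp (-t) := fun t => by positivity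
  have hderiv : ∀ t : ℝ, HasDerivAt g (Real.exp (-t) / (1 + Real.exp (-t)) ^ 2 - m) t := by
    intro t
    have h1 : HasDerivAt (fun t : ℝ => 1 + Real.exp (-t)) (-Real.exp (-t)) t := by
      have := (Real.hasDerivAt_exp (-t)).comp t (hasDerivAt_neg t)
      simpa using this.const_add 1
    have h2 : HasDerivAt (fun t : ℝ => (1 + Real.exp (-t))⁻¹)
        (-(-Real.exp (-t)) / (1 + Real.exp (-t)) ^ 2) t := h1.inv (hpos t).ne'
    have h3 : HasDerivAt (fun t : ℝ => m * t + (a * m + 1 / (1 + Real.exp a))) m t := by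
      simpa using ((hasDerivAt_id t).const_mul m).add_const (a * m + 1 / (1 + Real.exp a))
    simpa [hg, one_div, neg_neg, Pi.sub_def] using h2.sub h3
  have hkey : ∀ t ∈ Set.Icc (-a) a, m ≤ Real.exp (-t) / (1 + Real.exp (-t)) ^ 2 := by
    intro t ht
    have h1 : Real.exp (-a) ≤ Real.exp (-t) := Real.exp_le_exp.mpr (by linarith [ht.2])
    have h2 : Real.exp (-t) ≤ Real.exp a := Real.exp_le_exp.mpr (by linarith [ht.1])
    have h3 : Real.exp (-a) * Real.exp a = 1 := by rw [← Real.exp_add]; simp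
    have h4 : (1 : ℝ) ≤ Real.exp (-t) * Real.exp a := by
      nlinarith [Real.exp_pos a]
    rw [hm, div_le_div_iff₀ (by positivity) (by positivity)]
    nlinarith [mul_nonneg (sub_nonneg.mpr h2) (sub_nonneg.mpr h4)]
  have hcont : Continuous g := by
    have : Continuous fun t : ℝ => 1 + Real.exp (-t) := by continuity
    exact (continuous_const.div this fun t => (hpos t).ne').sub (by continuity)
  have hmono : MonotoneOn g (Set.Icc (-a) a) := by
    apply monotoneOn_of_deriv_nonneg (convex_Icc _ _) hcont.continuousOn
    · intro t ht
      exact (hderiv t).differentiableAt.differentiableWithinAt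
    · intro t ht
      rw [interior_Icc] at ht
      rw [(hderiv t).deriv]
      have := hkey t ⟨le_of_lt ht.1, le_of_lt ht.2⟩
      linarith
  have hma : -a ∈ Set.Icc (-a) a := ⟨le_refl _, by linarith⟩
  have h0 : g (-a) = 0 := by
    simp only [hg, neg_neg]
    ring
  have := hmono hma hz hz.1
  rw [h0] at this
  simp only [hg] at this
  have hmm : a * Real.exp a / (1 + Real.exp a) ^ 2 = a * m := by rw [hm]; ring
  rw [hmm]
  linarith
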